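/- Every extended caterpillar on n vertices has indegree sequence and outdegree sequence both equal to {1, 2, 3, …, n-2, n-1, n-1} (in some vertex ordering); consequently any two extended caterpillars on n vertices have the same indegree and outdegree sequences. -/

import Mathlib

open Matrix

/-- `c` traces a directed cycle of length `m+1` in the digraph `R`:
distinct vertices, consecutive arcs (indices wrap around in `Fin (m+1)`). -/
def DicycleOn {V : Type*} {m : ℕ} (R : V → V → Prop) (c : Fin (m+1) → V) : Prop :=
  Function.Injective c ∧ ∀ i, R (c i) (c (i+1))

/-- A digraph is noneven if some 0,1-weighting (valued in `ZMod 2`) of its arcs makes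
every directed cycle have odd total weight. -/
def IsNoneven {V : Type*} (R : V → V → Prop) : Prop :=
  ∃ w : V → V → ZMod 2, ∀ (m : ℕ) (c : Fin (m+1) → V),
    DicycleOn R c → ∑ i, w (c i) (c (i+1)) = 1

/-- A digraph is even if every 0,1-weighting of its arcs admits a directed cycle
of even total weight. -/
def IsEvenDigraph {V : Type*} (R : V → V → Prop) : Prop :=
  ∀ w : V → V → ZMod 2, ∃ (m : ℕ) (c : Fin (m+1) → V),
    DicycleOn R c ∧ ∑ i, w (c i) (c (i+1)) = 0

def StronglyConnected {V : Type*} (R : V → V → Prop) : Prop :=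
  ∀ u v, Relation.ReflTransGen R u v

/-- Removing any single vertex leaves a strongly connected digraph. -/
def StronglyTwoConnected {V : Type*} (R : V → V → Prop) : Prop :=
  ∀ x : V, StronglyConnected (fun a b : {y : V // y ≠ x} => R a b)

def SemiComplete {V : Type*} (R : V → V → Prop) : Prop :=
  ∀ u v : V, u ≠ v → R u v ∨ R v u

/-- The digraph W₄: double arcs 0↔1 and 2↔3, single arcs 0→2, 2→1, 1→3, 3→0
(the unique 2-connected semi-complete noneven digraph on 4 vertices; every vertex
has indegree 2 and outdegree 2 and there are 8 arcs). -/
def W4 : Fin 4 → Fin 4 → Prop := fun u v =>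
  (u = 0 ∧ v = 1) ∨ (u = 1 ∧ v = 0) ∨ (u = 2 ∧ v = 3) ∨ (u = 3 ∧ v = 2) ∨
  (u = 0 ∧ v = 2) ∨ (u = 2 ∧ v = 1) ∨ (u = 1 ∧ v = 3) ∨ (u = 3 ∧ v = 0)

/-- The symmetric double 4-cycle C₄*. -/
def C4star : Fin 4 → Fin 4 → Prop := fun u v => v = u + 1 ∨ u = v + 1

def DigraphIso {V W : Type*} (R : V → V → Prop) (S : W → W → Prop) : Prop :=
  ∃ e : V ≃ W, ∀ u v, R u v ↔ S (e u) (e v)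

/-- A sign pattern: entries in {-1, 0, 1}. -/
def IsSignPattern {I : Type*} (H : Matrix I I ℝ) : Prop :=
  ∀ i j, H i j = -1 ∨ H i j = 0 ∨ H i j = 1

/-- `A ∈ Q(H)`: the matrix `A` has sign pattern `H`. -/
def HasSignPattern {I : Type*} (A H : Matrix I I ℝ) : Prop :=
  ∀ i j, Real.sign (A i j) = H i j

/-- `Q(H)` contains a symplectic pair `(A, D)` with `Aᵀ D = I`. -/
def AllowsSymplecticPairs {I : Type*} [Fintype I] [DecidableEq I] (H : Matrix I I ℝ) : Prop :=
  ∃ A D : Matrix I I ℝ, HasSignPattern A H ∧ HasSignPattern D H ∧ Aᵀ * D = 1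

def IsSignNonsingular {I : Type*} [Fintype I] [DecidableEq I] (H : Matrix I I ℝ) : Prop :=
  ∀ A : Matrix I I ℝ, HasSignPattern A H → A.det ≠ 0

def NegativeDiagonal {I : Type*} (H : Matrix I I ℝ) : Prop := ∀ i, H i i = -1

/-- The (unweighted) digraph of the pattern `H` is `R`: an arc `(i,j)`, `i ≠ j`,
exactly for the off-diagonal nonzero entries. -/
def PatternDigraph {I : Type*} (H : Matrix I I ℝ) (R : I → I → Prop) : Prop :=
  ∀ i j, i ≠ j → (H i j ≠ 0 ↔ R i j)

/-- An unweighted digraph allows symplectic pairs if some negative-diagonal sign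
pattern whose digraph is `R` allows symplectic pairs. -/
def DigraphAllowsSymplecticPairs {V : Type*} [Fintype V] [DecidableEq V]
    (R : V → V → Prop) : Prop :=
  ∃ H : Matrix V V ℝ, IsSignPattern H ∧ NegativeDiagonal H ∧
    PatternDigraph H R ∧ AllowsSymplecticPairs H

/-- Tree edges of the caterpillar tree underlying an extended caterpillar:
consecutive backbone vertices, and blossom vertices joined to their backbone vertex.
`pos` is the blossom (backbone) index of a vertex, `bb j` the backbone vertex of index `j`. -/
def CaterpillarTreeEdge {n : ℕ} (pos : Fin n → ℕ) (bb : ℕ → Fin n) (u v : Fin n) : Prop :=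
  u ≠ v ∧ ((u = bb (pos u) ∧ v = bb (pos v) ∧ (pos v = pos u + 1 ∨ pos u = pos v + 1)) ∨
           (pos u = pos v ∧ (u = bb (pos u) ∨ v = bb (pos v))))

/-- `R` is an extended caterpillar on `Fin n`, where the natural order of `Fin n`
is the backbone-induced total order: there are `k` blossoms (`pos` monotone, surjective
onto `{0, …, k-1}` with backbone vertices `bb j`); the first and last blossoms are
trivial (no blossom vertices at the ends of the backbone); and the arcs are: one arc
`u → v` for every pair `v < u`, together with both arcs of every tree edge. -/
def IsExtendedCaterpillar {n : ℕ} (R : Fin n → Fin n → Prop) : Prop :=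
  ∃ (k : ℕ) (pos : Fin n → ℕ) (bb : ℕ → Fin n),
    0 < k ∧ Monotone pos ∧ (∀ v, pos v < k) ∧ (∀ j, j < k → pos (bb j) = j) ∧
    (∀ v, pos v = 0 → v = bb 0) ∧ (∀ v, pos v = k - 1 → v = bb (k - 1)) ∧
    (∀ u v, R u v ↔ (v < u ∨ (u < v ∧ CaterpillarTreeEdge pos bb u v)))

/-- Digraphs obtainable from the symmetric double cycle `C_k*` by subdividing arcs
and splitting vertices (the weak k-double-cycles). -/
inductive WeakDoubleCycle : (k : ℕ) → (V : Type) → (V → V → Prop) → Prop where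
  | base (m : ℕ) : WeakDoubleCycle (m+1) (Fin (m+1)) (fun u v => v = u + 1 ∨ u = v + 1)
  | subdivide {k : ℕ} {V : Type} {R : V → V → Prop} (a b : V) (hab : R a b)
      (h : WeakDoubleCycle k V R) :
      WeakDoubleCycle k (Option V) (fun x y =>
        (x = some a ∧ y = none) ∨ (x = none ∧ y = some b) ∨
        (∃ u v, x = some u ∧ y = some v ∧ R u v ∧ ¬(u = a ∧ v = b)))
  | split {k : ℕ} {V : Type} {R : V → V → Prop} (a : V) (h : WeakDoubleCycle k V R) :
      WeakDoubleCycle k (Option V) (fun x y =>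
        (x = some a ∧ y = none) ∨
        (∃ v, x = none ∧ y = some v ∧ R a v) ∨
        (∃ u v, x = some u ∧ y = some v ∧ R u v ∧ u ≠ a))

/-- C₄-cockades: start with the 4-cycle; repeatedly pick an edge `(u,v)`, add two new
vertices `u', v'` and the edges `(u,u')`, `(u',v')`, `(v',v)`. -/
inductive IsC4Cockade : (V : Type) → SimpleGraph V → Prop where
  | base : IsC4Cockade (Fin 4) (SimpleGraph.fromRel (fun u v => v = u + 1))
  | attach {V : Type} {G : SimpleGraph V} (u v : V) (huv : G.Adj u v)
      (h : IsC4Cockade V G) :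
      IsC4Cockade (V ⊕ Fin 2)
        (SimpleGraph.fromRel (fun x y =>
          (∃ a b, x = Sum.inl a ∧ y = Sum.inl b ∧ G.Adj a b) ∨
          (x = Sum.inl u ∧ y = Sum.inr 0) ∨ (x = Sum.inr 0 ∧ y = Sum.inr 1) ∨
          (x = Sum.inr 1 ∧ y = Sum.inl v)))

/-- `G` is 2-connected: connected, and removing any single vertex leaves it connected. -/
def GraphTwoConnected {V : Type*} (G : SimpleGraph V) : Prop :=
  G.Connected ∧ ∀ v : V, (G.induce {u | u ≠ v}).Connected


section StmtSixteenAux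

open Finset

private lemma ec_downward_char {n : ℕ} (p : Fin n → Prop) [DecidablePred p]
    (hdc : ∀ u w : Fin n, w ≤ u → p u → p w) (v : Fin n) :
    (v : ℕ) < (Finset.univ.filter p).card ↔ p v := by
  constructor
  · intro hv
    by_contra hpv
    have hsub : Finset.univ.filter p ⊆ Finset.Iio v := by
      intro w hw
      rw [Finset.mem_filter] at hw
      rw [Finset.mem_Iio]
      by_contra hlt
      exact hpv (hdc w v (le_of_not_gt hlt) hw.2)
    have := Finset.card_le_card hsub
    rw [Fin.card_Iio] at this
    omega
  · intro hpv
    have hsub : Finset.Iic v ⊆ Finset.univ.filter p := by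
      intro w hw
      rw [Finset.mem_Iic] at hw
      exact Finset.mem_filter.mpr ⟨Finset.mem_univ _, hdc v w hw hpv⟩
    have := Finset.card_le_card hsub
    rw [Fin.card_Iic] at this
    omega

private lemma ec_univ_val_map {n : ℕ} (g : ℕ → ℕ) :
    (Finset.univ.val.map fun v : Fin n => g v.val) = (Multiset.range n).map g := by
  have h2 := congrArg Finset.val (Fin.map_valEmbedding_univ (n := n))
  rw [Finset.map_val] at h2
  have h3 : (Finset.univ : Finset (Fin n)).val.map Fin.val = Multiset.range n := by
    rw [show ((Fin.valEmbedding : Fin n ↪ ℕ) : Fin n → ℕ) = Fin.val from rfl] at h2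
    rw [h2, Nat.Iio_eq_range]
    rfl
  rw [← h3, Multiset.map_map]
  rfl

private lemma ec_range_map_sub (m : ℕ) :
    (Multiset.range m).map (fun i => m - i) = (Multiset.range m).map (· + 1) := by
  rw [Multiset.Nodup.ext]
  · intro x
    simp only [Multiset.mem_map, Multiset.mem_range]
    constructor
    · rintro ⟨i, hi, rfl⟩; exact ⟨m - i - 1, by omega, by omega⟩
    · rintro ⟨i, hi, rfl⟩; exact ⟨m - i - 1, by omega, by omega⟩
  · exact Multiset.Nodup.map_on
      (fun i hi j hj hij => by
        rw [Multiset.mem_range] at hi hj; omega)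
      (Multiset.nodup_range m)
  · exact (Multiset.nodup_range m).map (fun a b h => by omega)

private lemma ec_range_succ' (m : ℕ) :
    Multiset.range (m + 1) = 0 ::ₘ (Multiset.range m).map (· + 1) := by
  simp [Multiset.range, List.range_succ_eq_map, Nat.succ_eq_add_one]

private lemma ec_indeg {n : ℕ} (hn : 1 ≤ n) (R : Fin n → Fin n → Prop)
    (h : IsExtendedCaterpillar R) :
    (Finset.univ.val.map fun v : Fin n => Nat.card {u : Fin n // R u v}) =
      (n - 1) ::ₘ (Multiset.range (n - 1)).map (· + 1) := by
  classical
  obtain ⟨k, pos, bb, hk, hmono, hposlt, hbb, h0, _hlast, hR⟩ := h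
  set v0 : Fin n := ⟨0, hn⟩ with hv0
  have F0 : ∀ a b : Fin n, pos a < pos b → a < b := by
    intro a b hab
    by_contra hba
    exact absurd (hmono (not_lt.mp hba)) (not_le.mpr hab)
  have hposv0 : pos v0 = 0 := by
    have h1 : v0 ≤ bb 0 := by simp [Fin.le_def, hv0]
    have h2 := hmono h1
    rw [hbb 0 hk] at h2
    omega
  have hbb0 : bb 0 = v0 := (h0 v0 hposv0).symm
  have hNat : ∀ v : Fin n, Nat.card {u : Fin n // R u v} =
      (Finset.univ.filter fun u => R u v).card := by
    intro v
    rw [Nat.card_eq_fintype_card, Fintype.card_subtype]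
  set a : ℕ → ℕ := fun j => (Finset.univ.filter fun u : Fin n => pos u < j).card with ha
  have achar : ∀ (j : ℕ) (v : Fin n), (v : ℕ) < a j ↔ pos v < j := by
    intro j v
    exact ec_downward_char _ (fun u w hwu hu => lt_of_le_of_lt (hmono hwu) hu) v
  have hsplit : ∀ v : Fin n, (Finset.univ.filter fun u => R u v).card =
      (n - 1 - (v : ℕ)) + (Finset.univ.filter fun u =>
        u < v ∧ CaterpillarTreeEdge pos bb u v).card := by
    intro v
    have heq : (Finset.univ.filter fun u => R u v) =
        Finset.Ioi v ∪ (Finset.univ.filter fun u =>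
          u < v ∧ CaterpillarTreeEdge pos bb u v) := by
      ext u
      simp only [Finset.mem_filter, Finset.mem_univ, true_and, Finset.mem_union,
        Finset.mem_Ioi]
      rw [hR]
    have hdisj : Disjoint (Finset.Ioi v) (Finset.univ.filter fun u =>
        u < v ∧ CaterpillarTreeEdge pos bb u v) := by
      rw [Finset.disjoint_left]
      intro u hu hu'
      rw [Finset.mem_Ioi] at hu
      rw [Finset.mem_filter] at hu'
      exact absurd hu'.2.1 (not_lt.mpr (le_of_lt hu))
    rw [heq, Finset.card_union_of_disjoint hdisj, Fin.card_Ioi]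
  have hD0 : (Finset.univ.filter fun u => R u v0).card = n - 1 := by
    rw [hsplit]
    have hempty : (Finset.univ.filter fun u : Fin n =>
        u < v0 ∧ CaterpillarTreeEdge pos bb u v0) = ∅ := by
      ext u
      simp only [Finset.mem_filter, Finset.mem_univ, true_and, Finset.notMem_empty,
        iff_false, not_and]
      intro hu
      exact absurd hu (by simp [Fin.lt_def, hv0])
    rw [hempty]
    simp [hv0]
  have hblossom : ∀ v : Fin n, v ≠ bb (pos v) →
      (Finset.univ.filter fun u => u < v ∧ CaterpillarTreeEdge pos bb u v).card =
        if bb (pos v) < v then 1 else 0 := by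
    intro v hv
    have hiff : ∀ u : Fin n, (u < v ∧ CaterpillarTreeEdge pos bb u v) ↔
        (bb (pos v) < v ∧ u = bb (pos v)) := by
      intro u
      constructor
      · rintro ⟨hlt', hne, hA | hB⟩
        · exact absurd hA.2.1 hv
        · obtain ⟨hpe, hub | hvb'⟩ := hB
          · rw [hpe] at hub
            exact ⟨hub ▸ hlt', hub⟩
          · exact absurd hvb' hv
      · rintro ⟨hblt, rfl⟩
        have hp : pos (bb (pos v)) = pos v := hbb _ (hposlt v)
        exact ⟨hblt, ne_of_lt hblt, Or.inr ⟨hp, Or.inl (by rw [hp])⟩⟩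
    rw [Finset.filter_congr (fun u _ => hiff u)]
    by_cases hb : bb (pos v) < v
    · simp [hb, Finset.filter_eq']
    · simp [hb]
  have hjpos : ∀ x : Fin n, x ≠ v0 → x = bb (pos x) → 1 ≤ pos x := by
    intro x hx hxb
    rcases Nat.eq_zero_or_pos (pos x) with h' | h'
    · exact absurd ((h0 x h').trans hbb0) hx
    · exact h'
  have hbackbone : ∀ v : Fin n, v ≠ v0 → v = bb (pos v) →
      a (pos v) ≤ (v : ℕ) ∧
      (Finset.univ.filter fun u => u < v ∧ CaterpillarTreeEdge pos bb u v).card =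
        1 + ((v : ℕ) - a (pos v)) := by
    intro v hv hvb
    have hj : 1 ≤ pos v := hjpos v hv hvb
    have hjk : pos v < k := hposlt v
    have hjm : pos v - 1 < k := by omega
    have hbbj1 : pos (bb (pos v - 1)) = pos v - 1 := hbb _ hjm
    have hbblt : bb (pos v - 1) < v := F0 _ _ (by rw [hbbj1]; omega)
    have hiff : ∀ u : Fin n, (u < v ∧ CaterpillarTreeEdge pos bb u v) ↔
        (u = bb (pos v - 1) ∨ (u < v ∧ pos u = pos v)) := by
      intro u
      constructor
      · rintro ⟨hlt', hne, hA | hB⟩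
        · obtain ⟨hua, -, hc | hc⟩ := hA
          · left
            rw [hua]
            congr 1
            omega
          · exfalso
            have := F0 v u (by omega)
            exact absurd hlt' (not_lt.mpr (le_of_lt this))
        · exact Or.inr ⟨hlt', hB.1⟩
      · rintro (rfl | ⟨hlt', hpe⟩)
        · refine ⟨hbblt, ne_of_lt hbblt, Or.inl ⟨?_, hvb, Or.inl ?_⟩⟩
          · rw [hbbj1]
          · rw [hbbj1]; omega
        · exact ⟨hlt', ne_of_lt hlt', Or.inr ⟨hpe, Or.inr hvb⟩⟩
    have hsetsplit : (Finset.univ.filter fun u => u < v ∧ CaterpillarTreeEdge pos bb u v) =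
        insert (bb (pos v - 1)) (Finset.univ.filter fun u : Fin n => u < v ∧ pos u = pos v) := by
      ext u
      simp only [Finset.mem_filter, Finset.mem_univ, true_and, Finset.mem_insert]
      exact hiff u
    have hnotmem : bb (pos v - 1) ∉
        (Finset.univ.filter fun u : Fin n => u < v ∧ pos u = pos v) := by
      intro hmem
      have hmem2 := (Finset.mem_filter.mp hmem).2.2
      rw [hbbj1] at hmem2
      omega
    have hIio : Finset.Iio v = (Finset.univ.filter fun u : Fin n => u < v ∧ pos u = pos v)
        ∪ (Finset.univ.filter fun u : Fin n => pos u < pos v) := by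
      ext u
      simp only [Finset.mem_Iio, Finset.mem_union, Finset.mem_filter, Finset.mem_univ, true_and]
      constructor
      · intro hu
        have hle : pos u ≤ pos v := hmono (le_of_lt hu)
        rcases eq_or_lt_of_le hle with h' | h'
        · exact Or.inl ⟨hu, h'⟩
        · exact Or.inr h'
      · rintro (⟨hu, -⟩ | hu)
        · exact hu
        · exact F0 u v hu
    have hdisj2 : Disjoint (Finset.univ.filter fun u : Fin n => u < v ∧ pos u = pos v)
        (Finset.univ.filter fun u : Fin n => pos u < pos v) := by
      rw [Finset.disjoint_left]
      intro u hu hu'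
      rw [Finset.mem_filter] at hu hu'
      omega
    have hcount : (v : ℕ) =
        (Finset.univ.filter fun u : Fin n => u < v ∧ pos u = pos v).card + a (pos v) := by
      have hc := congrArg Finset.card hIio
      rw [Fin.card_Iio, Finset.card_union_of_disjoint hdisj2] at hc
      exact hc
    refine ⟨by omega, ?_⟩
    rw [hsetsplit, Finset.card_insert_of_notMem hnotmem]
    omega
  set m : Fin n → ℕ := fun v =>
    if v = bb (pos v) then a (pos v) else if bb (pos v) < v then (v : ℕ) else (v : ℕ) + 1
    with hm
  have hmprop : ∀ v : Fin n, v ≠ v0 → (1 ≤ m v ∧ m v ≤ n - 1 ∧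
      (Finset.univ.filter fun u => R u v).card = n - m v) := by
    intro v hv
    have hvlt : (v : ℕ) ≤ n - 1 := by have := v.isLt; omega
    have hvpos : 1 ≤ (v : ℕ) := by
      rcases Nat.eq_zero_or_pos (v : ℕ) with h' | h'
      · exact absurd (by apply Fin.ext; simpa [hv0] using h' : v = v0) hv
      · exact h'
    by_cases hvb : v = bb (pos v)
    · obtain ⟨hav, hcard⟩ := hbackbone v hv hvb
      have ha1 : 1 ≤ a (pos v) := by
        have hj := hjpos v hv hvb
        have := (achar (pos v) v0).mpr (by rw [hposv0]; omega)
        omega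
      simp only [hm, if_pos hvb]
      refine ⟨ha1, by omega, ?_⟩
      rw [hsplit, hcard]
      omega
    · have hcard := hblossom v hvb
      simp only [hm, if_neg hvb]
      by_cases hb : bb (pos v) < v
      · simp only [if_pos hb]
        refine ⟨hvpos, hvlt, ?_⟩
        rw [hsplit, hcard, if_pos hb]
        omega
      · simp only [if_neg hb]
        have hvlt' : (v : ℕ) < (bb (pos v) : ℕ) := by
          rcases lt_trichotomy v (bb (pos v)) with h' | h' | h'
          · exact h'
          · exact absurd h' hvb
          · exact absurd h' hb
        have hble : (bb (pos v) : ℕ) ≤ n - 1 := by have := (bb (pos v)).isLt; omega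
        refine ⟨by omega, by omega, ?_⟩
        rw [hsplit, hcard, if_neg hb]
        omega
  -- injectivity helper lemmas
  have hback_le : ∀ w : Fin n, w = bb (pos w) → a (pos w) ≤ (w : ℕ) := by
    intro w hwb
    have h1 := achar (pos w) w
    omega
  have mixLB : ∀ v w : Fin n, v ≠ bb (pos v) → bb (pos v) < v → w = bb (pos w) →
      (v : ℕ) = a (pos w) → v ≠ w → False := by
    intro v w hvb hblt hwb hveq hne
    have h1 := hback_le w hwb
    have h2 := achar (pos w) v
    have hvw : (v : ℕ) < (w : ℕ) := by
      have hle : (v : ℕ) ≤ (w : ℕ) := by omega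
      rcases lt_or_eq_of_le hle with h' | h'
      · exact h'
      · exact absurd (Fin.ext h') hne
    have hple : pos v ≤ pos w := hmono (Fin.le_def.mpr (le_of_lt hvw))
    have hpe : pos v = pos w := by omega
    have hw' : bb (pos v) = w := by rw [hpe, ← hwb]
    rw [hw', Fin.lt_def] at hblt
    omega
  have mixUB : ∀ v w : Fin n, v ≠ bb (pos v) → ¬ bb (pos v) < v → w = bb (pos w) →
      (v : ℕ) + 1 = a (pos w) → False := by
    intro v w hvb hb hwb hveq
    have h2 := achar (pos w) v
    have h3 := achar (pos w) (bb (pos v))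
    have hpbb : pos (bb (pos v)) = pos v := hbb _ (hposlt v)
    rw [hpbb] at h3
    have h5 : (v : ℕ) < (bb (pos v) : ℕ) := by
      rcases lt_trichotomy v (bb (pos v)) with h' | h' | h'
      · exact h'
      · exact absurd h' hvb
      · exact absurd h' hb
    omega
  have mixLU : ∀ v w : Fin n, v ≠ bb (pos v) → bb (pos v) < v →
      w ≠ bb (pos w) → ¬ bb (pos w) < w → (v : ℕ) = (w : ℕ) + 1 → False := by
    intro v w hvb hblt hwb hb hveq
    have hwlt : (w : ℕ) < (bb (pos w) : ℕ) := by
      rcases lt_trichotomy w (bb (pos w)) with h' | h' | h'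
      · exact h'
      · exact absurd h' hwb
      · exact absurd h' hb
    have hple : pos w ≤ pos v := hmono (Fin.le_def.mpr (by omega))
    rcases eq_or_lt_of_le hple with h' | h'
    · rw [← h'] at hblt
      rw [Fin.lt_def] at hblt
      omega
    · have hlt2 := F0 (bb (pos w)) v (by rw [hbb _ (hposlt w)]; exact h')
      rw [Fin.lt_def] at hlt2
      omega
  have mixBB : ∀ v w : Fin n, v = bb (pos v) → w = bb (pos w) →
      a (pos v) = a (pos w) → v = w := by
    intro v w hvb hwb heq
    rcases lt_trichotomy (pos v) (pos w) with h' | h' | h'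
    · exfalso
      have h1 := achar (pos w) v
      have h2 := achar (pos v) v
      omega
    · rw [hvb, hwb, h']
    · exfalso
      have h1 := achar (pos v) w
      have h2 := achar (pos w) w
      omega
  have hminj : ∀ v w : Fin n, v ≠ v0 → w ≠ v0 → m v = m w → v = w := by
    intro v w hv hw hmeq
    simp only [hm] at hmeq
    by_cases hvb : v = bb (pos v) <;> by_cases hwb : w = bb (pos w)
    · rw [if_pos hvb, if_pos hwb] at hmeq
      exact mixBB v w hvb hwb hmeq
    · rw [if_pos hvb, if_neg hwb] at hmeq
      by_cases hb : bb (pos w) < w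
      · rw [if_pos hb] at hmeq
        by_cases hne : w = v
        · exact hne.symm
        · exact (mixLB w v hwb hb hvb hmeq.symm hne).elim
      · rw [if_neg hb] at hmeq
        exact (mixUB w v hwb hb hvb hmeq.symm).elim
    · rw [if_neg hvb, if_pos hwb] at hmeq
      by_cases hb : bb (pos v) < v
      · rw [if_pos hb] at hmeq
        by_cases hne : v = w
        · exact hne
        · exact (mixLB v w hvb hb hwb hmeq hne).elim
      · rw [if_neg hb] at hmeq
        exact (mixUB v w hvb hb hwb hmeq).elim
    · rw [if_neg hvb, if_neg hwb] at hmeq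
      by_cases hb : bb (pos v) < v <;> by_cases hb' : bb (pos w) < w
      · rw [if_pos hb, if_pos hb'] at hmeq
        exact Fin.ext hmeq
      · rw [if_pos hb, if_neg hb'] at hmeq
        exact (mixLU v w hvb hb hwb hb' hmeq).elim
      · rw [if_neg hb, if_pos hb'] at hmeq
        exact (mixLU w v hwb hb' hvb hb hmeq.symm).elim
      · rw [if_neg hb, if_neg hb'] at hmeq
        exact Fin.ext (by omega)
  -- assemble
  have hmlt : ∀ v : Fin n, v ≠ v0 → m v < n := by
    intro v hv
    have := (hmprop v hv).2.1
    omega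
  have heinj : Function.Injective
      (fun v : Fin n => if hv : v = v0 then v0 else (⟨m v, hmlt v hv⟩ : Fin n)) := by
    intro v w hvw
    simp only at hvw
    by_cases hv : v = v0 <;> by_cases hw : w = v0
    · rw [hv, hw]
    · exfalso
      rw [dif_pos hv, dif_neg hw] at hvw
      have h1 := (hmprop w hw).1
      have h2 : (v0 : Fin n).val = m w := congrArg Fin.val hvw
      simp [hv0] at h2
      omega
    · exfalso
      rw [dif_neg hv, dif_pos hw] at hvw
      have h1 := (hmprop v hv).1
      have h2 : m v = (v0 : Fin n).val := congrArg Fin.val hvw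
      simp [hv0] at h2
      omega
    · rw [dif_neg hv, dif_neg hw] at hvw
      exact hminj v w hv hw (congrArg Fin.val hvw)
  have hbij := Finite.injective_iff_bijective.mp heinj
  have hDt : ∀ v : Fin n, (Finset.univ.filter fun u => R u v).card =
      (fun i : ℕ => if i = 0 then n - 1 else n - i)
        ((fun v : Fin n => if hv : v = v0 then v0 else (⟨m v, hmlt v hv⟩ : Fin n)) v).val := by
    intro v
    by_cases hv : v = v0
    · rw [hv]
      simp only [dif_pos]
      simpa [hv0] using hD0
    · obtain ⟨h1, h2, h3⟩ := hmprop v hv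
      simp only [dif_neg hv]
      rw [if_neg (by omega)]
      exact h3
  calc (Finset.univ.val.map fun v : Fin n => Nat.card {u : Fin n // R u v})
      = Finset.univ.val.map ((fun i : ℕ => if i = 0 then n - 1 else n - i) ∘ Fin.val ∘
          (fun v : Fin n => if hv : v = v0 then v0 else (⟨m v, hmlt v hv⟩ : Fin n))) := by
        apply Multiset.map_congr rfl
        intro v _
        rw [hNat, hDt v]
        rfl
    _ = ((Finset.univ.val.map
          (fun v : Fin n => if hv : v = v0 then v0 else (⟨m v, hmlt v hv⟩ : Fin n))).map
          (fun v : Fin n => (fun i : ℕ => if i = 0 then n - 1 else n - i) v.val)) := by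
        rw [Multiset.map_map]
        rfl
    _ = Finset.univ.val.map
          (fun v : Fin n => (fun i : ℕ => if i = 0 then n - 1 else n - i) v.val) := by
        congr 1
        have hu := Finset.map_univ_equiv (Equiv.ofBijective _ hbij)
        have hu2 := congrArg Finset.val hu
        rw [Finset.map_val] at hu2
        exact hu2
    _ = (Multiset.range n).map (fun i : ℕ => if i = 0 then n - 1 else n - i) :=
        ec_univ_val_map (fun i : ℕ => if i = 0 then n - 1 else n - i)
    _ = (n - 1) ::ₘ (Multiset.range (n - 1)).map (· + 1) := by
        obtain ⟨m', rfl⟩ : ∃ m', n = m' + 1 := ⟨n - 1, by omega⟩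
        rw [ec_range_succ', Multiset.map_cons, Multiset.map_map]
        simp only [if_pos rfl]
        congr 1
        have hfun : ((fun i : ℕ => if i = 0 then m' + 1 - 1 else m' + 1 - i) ∘ (· + 1)) =
            fun i : ℕ => m' - i := by
          funext i
          simp only [Function.comp]
          rw [if_neg (by omega)]
          omega
        rw [hfun, ec_range_map_sub]
        simp

private lemma ec_rev {n : ℕ} (R : Fin n → Fin n → Prop) (h : IsExtendedCaterpillar R) :
    IsExtendedCaterpillar (fun u v : Fin n => R v.rev u.rev) := by
  obtain ⟨k, pos, bb, hk, hmono, hposlt, hbb, h0, hlast, hR⟩ := h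
  refine ⟨k, fun v => k - 1 - pos v.rev, fun j => (bb (k - 1 - j)).rev, hk, ?_, ?_, ?_, ?_, ?_, ?_⟩
  · intro x y hxy
    have h1 : y.rev ≤ x.rev := Fin.rev_le_rev.mpr hxy
    have h2 := hmono h1
    show k - 1 - pos x.rev ≤ k - 1 - pos y.rev
    omega
  · intro v
    show k - 1 - pos v.rev < k
    omega
  · intro j hj
    show k - 1 - pos (bb (k - 1 - j)).rev.rev = j
    rw [Fin.rev_rev, hbb _ (by omega)]
    omega
  · intro v hv
    have hv' : k - 1 - pos v.rev = 0 := hv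
    have h1 : pos v.rev < k := hposlt _
    have h2 : pos v.rev = k - 1 := by omega
    have h3 := hlast v.rev h2
    show v = (bb (k - 1 - 0)).rev
    rw [Nat.sub_zero, ← h3, Fin.rev_rev]
  · intro v hv
    have hv' : k - 1 - pos v.rev = k - 1 := hv
    have h1 : pos v.rev < k := hposlt _
    have h2 : pos v.rev = 0 := by omega
    have h3 := h0 v.rev h2
    show v = (bb (k - 1 - (k - 1))).rev
    rw [Nat.sub_self, ← h3, Fin.rev_rev]
  · intro u v
    have hbbrev : ∀ w : Fin n,
        (w = (bb (k - 1 - (k - 1 - pos w.rev))).rev) ↔ w.rev = bb (pos w.rev) := by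
      intro w
      have h1 : pos w.rev < k := hposlt _
      have h2 : k - 1 - (k - 1 - pos w.rev) = pos w.rev := by omega
      rw [h2]
      constructor
      · intro h'
        have h3 := congrArg Fin.rev h'
        rw [Fin.rev_rev] at h3
        exact h3
      · intro h'
        have h3 := congrArg Fin.rev h'
        rw [Fin.rev_rev] at h3
        exact h3
    have hT : CaterpillarTreeEdge pos bb v.rev u.rev ↔
        CaterpillarTreeEdge (fun v : Fin n => k - 1 - pos v.rev)
          (fun j => (bb (k - 1 - j)).rev) u v := by
      simp only [CaterpillarTreeEdge]
      have hx : pos u.rev < k := hposlt _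
      have hy : pos v.rev < k := hposlt _
      have hub := hbbrev u
      have hvb := hbbrev v
      have hne : v.rev ≠ u.rev ↔ u ≠ v := by
        constructor
        · intro h' h''
          exact h' (by rw [h''])
        · intro h' h''
          exact h' (Fin.rev_injective h'').symm
      constructor
      · rintro ⟨h1, ⟨ha1, ha2, ha3⟩ | ⟨hb1, hb2⟩⟩
        · exact ⟨hne.mp h1, Or.inl ⟨hub.mpr ha2, hvb.mpr ha1, by omega⟩⟩
        · refine ⟨hne.mp h1, Or.inr ⟨by omega, ?_⟩⟩
          rcases hb2 with h' | h'
          · exact Or.inr (hvb.mpr h')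
          · exact Or.inl (hub.mpr h')
      · rintro ⟨h1, ⟨ha1, ha2, ha3⟩ | ⟨hb1, hb2⟩⟩
        · exact ⟨hne.mpr h1, Or.inl ⟨hvb.mp ha2, hub.mp ha1, by omega⟩⟩
        · refine ⟨hne.mpr h1, Or.inr ⟨by omega, ?_⟩⟩
          rcases hb2 with h' | h'
          · exact Or.inr (hub.mp h')
          · exact Or.inl (hvb.mp h')
    show R v.rev u.rev ↔ _
    rw [hR, Fin.rev_lt_rev, Fin.rev_lt_rev, hT]

private lemma ec_outdeg {n : ℕ} (hn : 1 ≤ n) (R : Fin n → Fin n → Prop)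
    (h : IsExtendedCaterpillar R) :
    (Finset.univ.val.map fun v : Fin n => Nat.card {u : Fin n // R v u}) =
      (n - 1) ::ₘ (Multiset.range (n - 1)).map (· + 1) := by
  have hm := ec_indeg hn _ (ec_rev R h)
  have hcard : ∀ v : Fin n, Nat.card {u : Fin n // R v.rev u.rev} =
      Nat.card {u : Fin n // R v.rev u} := by
    intro v
    exact Nat.card_congr (Equiv.subtypeEquiv (Fin.revPerm) (fun u => by simp))
  have step : (Finset.univ.val.map fun v : Fin n => Nat.card {u : Fin n // R v.rev u.rev}) =
      Finset.univ.val.map fun v : Fin n => Nat.card {u : Fin n // R v u} := by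
    have h1 : (Finset.univ.val.map fun v : Fin n => Nat.card {u : Fin n // R v.rev u.rev}) =
        Finset.univ.val.map fun v : Fin n => Nat.card {u : Fin n // R v.rev u} :=
      Multiset.map_congr rfl (fun v _ => hcard v)
    rw [h1]
    have h2 : (Finset.univ.val.map (Fin.rev : Fin n → Fin n)) = Finset.univ.val := by
      have h3 := congrArg Finset.val (Finset.map_univ_equiv (Fin.revPerm (n := n)))
      rw [Finset.map_val] at h3
      exact h3
    calc (Finset.univ.val.map fun v : Fin n => Nat.card {u : Fin n // R v.rev u})
        = (Finset.univ.val.map (Fin.rev : Fin n → Fin n)).map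
            (fun v : Fin n => Nat.card {u : Fin n // R v u}) := by
          rw [Multiset.map_map]
          rfl
      _ = Finset.univ.val.map (fun v : Fin n => Nat.card {u : Fin n // R v u}) := by
          rw [h2]
  rw [← step]
  exact hm

end StmtSixteenAux

/-- every extended caterpillar on n vertices has indegree and outdegree
multiset {1, 2, …, n-2, n-1, n-1}; hence any two extended caterpillars on n vertices
have the same indegree and outdegree sequences. -/
theorem stmt16 {n : ℕ} (hn : 1 ≤ n) (R : Fin n → Fin n → Prop)
    (h : IsExtendedCaterpillar R) :
    ((Finset.univ.val.map fun v : Fin n => Nat.card {u : Fin n // R u v}) =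
        (n - 1) ::ₘ (Multiset.range (n - 1)).map (· + 1) ∧
      (Finset.univ.val.map fun v : Fin n => Nat.card {u : Fin n // R v u}) =
        (n - 1) ::ₘ (Multiset.range (n - 1)).map (· + 1)) ∧
    ∀ R' : Fin n → Fin n → Prop, IsExtendedCaterpillar R' →
      ((Finset.univ.val.map fun v : Fin n => Nat.card {u : Fin n // R u v}) =
          (Finset.univ.val.map fun v : Fin n => Nat.card {u : Fin n // R' u v}) ∧
        (Finset.univ.val.map fun v : Fin n => Nat.card {u : Fin n // R v u}) =
          (Finset.univ.val.map fun v : Fin n => Nat.card {u : Fin n // R' v u})) := by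
  have h1 := ec_indeg hn R h
  have h2 := ec_outdeg hn R h
  refine ⟨⟨h1, h2⟩, ?_⟩
  intro R' h'
  exact ⟨h1.trans (ec_indeg hn R' h').symm, h2.trans (ec_outdeg hn R' h').symm⟩
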